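/- arXiv:2206.06727 — 2 statements merged into one kernel-verified Lean document; each statement's English description precedes it below -/
import Mathlib

section
/- For real numbers x_1,…,x_n and normalized elementary symmetric polynomials H_k = S_k(x)/C(n,k) (with H_0 = 1), for every k ∈ {0,…,n−2} one has H_k · H_{k+2} ≤ H_{k+1}², i.e. the Newton–Maclaurin inequality S_k(x)·S_{k+2}(x)/(C(n,k)·C(n,k+2)) ≤ (S_{k+1}(x)/C(n,k+1))². -/
open Finset Polynomial

/-- Removing-one-element description of the sum over subsets of size `card - 1`. -/
lemma newtonL1 {ι : Type*} [DecidableEq ι] (s : Finset ι) (hs : s.Nonempty) (x : ι → ℝ) :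
    ∑ A ∈ s.powersetCard (s.card - 1), ∏ i ∈ A, x i = ∑ j ∈ s, ∏ i ∈ s.erase j, x i := by
  have himg : s.powersetCard (s.card - 1) = s.image (fun j => s.erase j) := by
    ext A
    simp only [Finset.mem_powersetCard, Finset.mem_image]
    constructor
    · rintro ⟨hsub, hcard⟩
      have hpos : 0 < s.card := Finset.card_pos.2 hs
      have hne : A ≠ s := by intro h; subst h; omega
      obtain ⟨j, hjs, hjA⟩ := Finset.exists_of_ssubset (hsub.ssubset_of_ne hne)
      refine ⟨j, hjs, ?_⟩
      have hsub' : A ⊆ s.erase j := Finset.subset_erase.2 ⟨hsub, hjA⟩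
      exact (Finset.eq_of_subset_of_card_le hsub'
        (by rw [Finset.card_erase_of_mem hjs]; omega)).symm
    · rintro ⟨j, hjs, rfl⟩
      exact ⟨Finset.erase_subset _ _, Finset.card_erase_of_mem hjs⟩
  have hinj : ∀ j ∈ s, ∀ j' ∈ s, s.erase j = s.erase j' → j = j' := by
    intro j hj j' hj' h
    by_contra hne
    have hj2 : j ∈ s.erase j := by rw [h]; exact Finset.mem_erase.2 ⟨hne, hj⟩
    exact (Finset.mem_erase.1 hj2).1 rfl
  rw [himg, Finset.sum_image hinj]

/-- Double counting subsets of fixed size avoiding one point. -/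
lemma newtonL2 {ι : Type*} [DecidableEq ι] [Fintype ι] (t : ℕ) (f : Finset ι → ℝ) :
    ∑ i : ι, ∑ A ∈ (Finset.univ.erase i).powersetCard t, f A
      = ∑ A ∈ (Finset.univ : Finset ι).powersetCard t, (Fintype.card ι - t : ℕ) * f A := by
  have hps : ∀ i : ι, (Finset.univ.erase i).powersetCard t
      = ((Finset.univ : Finset ι).powersetCard t).filter (fun A => i ∉ A) := by
    intro i
    ext A
    simp only [Finset.mem_powersetCard, Finset.mem_filter, Finset.subset_erase]
    tauto
  simp_rw [hps, Finset.sum_filter]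
  rw [Finset.sum_comm]
  refine Finset.sum_congr rfl fun A hA => ?_
  rw [Finset.sum_ite, Finset.sum_const_zero, add_zero, Finset.sum_const, nsmul_eq_mul]
  congr 2
  have : Finset.univ.filter (fun x => x ∉ A) = Aᶜ := by ext y; simp [Finset.mem_compl]
  rw [this, Finset.card_compl, (Finset.mem_powersetCard.1 hA).2]

/-- The top case of Newton's inequality, proved via Cauchy–Schwarz. -/
lemma newtonTop {ι : Type*} [DecidableEq ι] [Fintype ι] (k : ℕ)
    (hcard : Fintype.card ι = k + 2) (x : ι → ℝ) :
    2 * (k + 2 : ℝ) *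
        ((∑ A ∈ (Finset.univ : Finset ι).powersetCard k, ∏ i ∈ A, x i) *
          (∑ A ∈ (Finset.univ : Finset ι).powersetCard (k + 2), ∏ i ∈ A, x i))
      ≤ (k + 1 : ℝ) * (∑ A ∈ (Finset.univ : Finset ι).powersetCard (k + 1), ∏ i ∈ A, x i) ^ 2 := by
  have hcu : (Finset.univ : Finset ι).card = k + 2 := by simp [hcard]
  set p : ι → ℝ := fun i => ∏ j ∈ Finset.univ.erase i, x j with hp
  have huniv_ne : (Finset.univ : Finset ι).Nonempty := by
    rw [← Finset.card_pos, hcu]; omega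
  have S1 : ∑ A ∈ (Finset.univ : Finset ι).powersetCard (k + 1), ∏ i ∈ A, x i = ∑ i : ι, p i := by
    have := newtonL1 (Finset.univ : Finset ι) huniv_ne x
    rw [hcu] at this
    simpa using this
  have S2 : ∑ A ∈ (Finset.univ : Finset ι).powersetCard (k + 2), ∏ i ∈ A, x i
      = ∏ i : ι, x i := by
    rw [← hcu, Finset.powersetCard_self, Finset.sum_singleton]
  have S3 : ∀ i : ι, ∀ j ∈ Finset.univ.erase i,
      p i * p j = (∏ l : ι, x l) * ∏ l ∈ (Finset.univ.erase i).erase j, x l := by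
    intro i j hj
    have hji : j ≠ i := (Finset.mem_erase.1 hj).1
    have h1 : p i = x j * ∏ l ∈ (Finset.univ.erase i).erase j, x l := by
      rw [hp]; exact (Finset.mul_prod_erase _ x (Finset.mem_erase.2 ⟨hji, Finset.mem_univ j⟩)).symm
    have h2 : p j = x i * ∏ l ∈ (Finset.univ.erase j).erase i, x l := by
      rw [hp]
      exact (Finset.mul_prod_erase _ x (Finset.mem_erase.2 ⟨hji.symm, Finset.mem_univ i⟩)).symm
    have h3 : (Finset.univ.erase j).erase i = (Finset.univ.erase i).erase j :=
      Finset.erase_right_comm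
    have h4 : ∏ l : ι, x l = x i * p i :=
      (Finset.mul_prod_erase _ x (Finset.mem_univ i)).symm
    rw [h2, h3, h4, h1]; ring
  have S4 : ∑ i : ι, ∑ j ∈ Finset.univ.erase i, ∏ l ∈ (Finset.univ.erase i).erase j, x l
      = 2 * ∑ A ∈ (Finset.univ : Finset ι).powersetCard k, ∏ i ∈ A, x i := by
    have hinner : ∀ i : ι, ∑ j ∈ Finset.univ.erase i, ∏ l ∈ (Finset.univ.erase i).erase j, x l
        = ∑ A ∈ (Finset.univ.erase i).powersetCard k, ∏ l ∈ A, x l := by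
      intro i
      have hne : (Finset.univ.erase i).Nonempty := by
        rw [← Finset.card_pos, Finset.card_erase_of_mem (Finset.mem_univ i), hcu]; omega
      have := newtonL1 (Finset.univ.erase i) hne x
      rw [Finset.card_erase_of_mem (Finset.mem_univ i), hcu] at this
      simpa using this.symm
    simp_rw [hinner]
    rw [newtonL2 k (fun A => ∏ l ∈ A, x l), hcard]
    rw [Finset.mul_sum]
    refine Finset.sum_congr rfl fun A hA => ?_
    norm_num
  have S5 : ∑ i : ι, ∑ j ∈ Finset.univ.erase i, p i * p j
      = (∑ i : ι, p i) ^ 2 - ∑ i : ι, p i ^ 2 := by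
    have : ∀ i : ι, ∑ j ∈ Finset.univ.erase i, p i * p j = p i * ((∑ l : ι, p l) - p i) := by
      intro i
      rw [← Finset.mul_sum, Finset.sum_erase_eq_sub (Finset.mem_univ i)]
    simp_rw [this]
    simp_rw [mul_sub]
    rw [Finset.sum_sub_distrib, ← Finset.sum_mul, sq]
    congr 1
    exact Finset.sum_congr rfl fun i _ => (sq (p i)).symm
  have key : (∑ i : ι, p i) ^ 2 - ∑ i : ι, p i ^ 2
      = (∏ l : ι, x l) * (2 * ∑ A ∈ (Finset.univ : Finset ι).powersetCard k, ∏ i ∈ A, x i) := by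
    rw [← S5, ← S4, Finset.mul_sum]
    refine Finset.sum_congr rfl fun i _ => ?_
    rw [Finset.mul_sum]
    exact Finset.sum_congr rfl fun j hj => S3 i j hj
  have CS : (∑ i : ι, p i) ^ 2 ≤ (k + 2 : ℝ) * ∑ i : ι, p i ^ 2 := by
    have := sq_sum_le_card_mul_sum_sq (s := (Finset.univ : Finset ι)) (f := p)
    rw [hcu] at this
    exact_mod_cast this
  rw [S1, S2]
  nlinarith [key, CS, sq_nonneg (∑ i : ι, p i)]

/-- The differentiation step: from a multiset of reals produce one of smaller
cardinality with proportional elementary symmetric functions. -/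
lemma newtonDeriv (s : Multiset ℝ) (hm : 1 ≤ Multiset.card s) :
    ∃ t : Multiset ℝ, Multiset.card t = Multiset.card s - 1 ∧
      ∀ j ≤ Multiset.card s - 1,
        (Multiset.card s : ℝ) * t.esymm j
          = ((Multiset.card s - j : ℕ) : ℝ) * s.esymm j := by
  set m := Multiset.card s with hmdef
  set p : ℝ[X] := (s.map fun r => X + C r).prod with hpdef
  have hmonic : p.Monic := by
    apply monic_multiset_prod_of_monic
    intro f hf
    exact monic_X_add_C f
  have hpdeg : p.natDegree = m := by
    rw [hpdef, natDegree_multiset_prod_of_monic]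
    · rw [Multiset.map_map]
      simp [Function.comp_def, natDegree_X_add_C, hmdef]
    · intro f hf
      obtain ⟨r, _, rfl⟩ := Multiset.mem_map.1 hf
      exact monic_X_add_C r
  have hproots : p.roots = s.map Neg.neg := by
    have hrw : p = ((s.map Neg.neg).map fun a => X - C a).prod := by
      rw [hpdef, Multiset.map_map]
      congr 1
      apply Multiset.map_congr rfl
      intro a _
      simp [sub_neg_eq_add]
    rw [hrw, roots_multiset_prod_X_sub_C]
  set q : ℝ[X] := derivative p with hqdef
  have hq_ge : m - 1 ≤ Multiset.card q.roots := by
    have h1 := p.card_roots_le_derivative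
    rw [hproots, Multiset.card_map, ← hqdef] at h1
    omega
  have hqdeg_le : q.natDegree ≤ m - 1 := by
    have := natDegree_derivative_le p
    rw [← hqdef, hpdeg] at this
    exact this
  have hq_le : Multiset.card q.roots ≤ q.natDegree := card_roots' q
  have hqcard : Multiset.card q.roots = m - 1 := by omega
  have hqdeg : q.natDegree = m - 1 := by omega
  have hcoeffp : p.coeff m = 1 := by
    have := hmonic.coeff_natDegree
    rwa [hpdeg] at this
  have hlead : q.leadingCoeff = (m : ℝ) := by
    rw [Polynomial.leadingCoeff, hqdeg, hqdef, coeff_derivative]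
    rw [show m - 1 + 1 = m from by omega, hcoeffp]
    rw [Nat.cast_sub hm]
    push_cast
    ring
  have hfact : C q.leadingCoeff * (q.roots.map fun a => X - C a).prod = q :=
    C_leadingCoeff_mul_prod_multiset_X_sub_C (by rw [hqcard, hqdeg])
  refine ⟨q.roots.map Neg.neg, by rw [Multiset.card_map, hqcard], ?_⟩
  set t := q.roots.map Neg.neg with htdef
  have htcard : Multiset.card t = m - 1 := by rw [htdef, Multiset.card_map, hqcard]
  have hq_eq : q = C (m : ℝ) * (t.map fun r => X + C r).prod := by
    rw [← hfact, hlead, htdef, Multiset.map_map]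
    congr 2
    apply Multiset.map_congr rfl
    intro a _
    simp [sub_eq_add_neg]
  intro j hj
  have h1 : q.coeff (m - 1 - j) = (m : ℝ) * t.esymm j := by
    rw [hq_eq, coeff_C_mul,
      Multiset.prod_X_add_C_coeff t (by omega : m - 1 - j ≤ Multiset.card t)]
    rw [htcard, show m - 1 - (m - 1 - j) = j from by omega]
  have h2 : q.coeff (m - 1 - j) = ((m - j : ℕ) : ℝ) * s.esymm j := by
    rw [hqdef, coeff_derivative, show m - 1 - j + 1 = m - j from by omega]
    rw [hpdef, Multiset.prod_X_add_C_coeff s (by omega : m - j ≤ Multiset.card s)]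
    rw [← hmdef, show m - (m - j) = j from by omega]
    rw [show m - 1 - j = m - j - 1 from by omega,
      Nat.cast_sub (by omega : 1 ≤ m - j)]
    push_cast
    ring
  rw [← h1, h2]

lemma newtonChooseId (m j : ℕ) (hm : 1 ≤ m) :
    (m - j) * m.choose j = m * (m - 1).choose j := by
  obtain ⟨n, rfl⟩ := Nat.exists_eq_add_of_le hm
  rw [show 1 + n = n + 1 from Nat.add_comm 1 n]
  simp only [Nat.add_sub_cancel]
  rw [mul_comm, ← Nat.choose_succ_right_eq, ← Nat.add_one_mul_choose_eq]

lemma newtonTwoChooseTwo (m : ℕ) : 2 * m.choose 2 = m * (m - 1) := by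
  cases m with
  | zero => rfl
  | succ n =>
    rw [Nat.choose_two_right]
    simp only [Nat.add_sub_cancel]
    have hdvd : 2 ∣ (n + 1) * n := by
      rw [Nat.mul_comm]
      exact (Nat.even_mul_succ_self n).two_dvd
    exact Nat.mul_div_cancel' hdvd

/-- Newton's inequality for multisets of reals. -/
lemma newton_ms (m : ℕ) : ∀ s : Multiset ℝ, Multiset.card s = m → ∀ k, k + 2 ≤ m →
    s.esymm k / (m.choose k) * (s.esymm (k + 2) / (m.choose (k + 2)))
      ≤ (s.esymm (k + 1) / (m.choose (k + 1))) ^ 2 := by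
  induction m using Nat.strong_induction_on with
  | _ m ih =>
    intro s hs k hk
    rcases eq_or_lt_of_le hk with heq | hlt
    · -- top case : m = k + 2
      subst heq
      -- realize s as a function on `Fin`
      set l : List ℝ := s.toList with hldef
      have hl : (l : Multiset ℝ) = s := s.coe_toList
      have hlen : l.length = k + 2 := by rw [hldef, Multiset.length_toList, hs]
      have hcard : Fintype.card (Fin l.length) = k + 2 := by simp [hlen]
      have hes : ∀ j, s.esymm j
          = ∑ A ∈ (Finset.univ : Finset (Fin l.length)).powersetCard j, ∏ i ∈ A, l.get i := by
        intro j
        rw [← Finset.esymm_map_val]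
        congr 1
        rw [Fin.univ_val_map, List.ofFn_get, hl]
      have htop := newtonTop k hcard l.get
      rw [← hes, ← hes, ← hes] at htop
      have hCk : (k + 2).choose k = (k + 2).choose 2 := by
        rw [← Nat.choose_symm (by omega : 2 ≤ k + 2), show k + 2 - 2 = k from by omega]
      have hCk1 : (k + 2).choose (k + 1) = k + 2 := by
        rw [show k + 1 = k + 2 - 1 from by omega,
          Nat.choose_symm (by omega : 1 ≤ k + 2), Nat.choose_one_right]
      have h2C : 2 * ((k + 2).choose 2) = (k + 2) * (k + 1) := by
        rw [newtonTwoChooseTwo (k + 2), show k + 2 - 1 = k + 1 from by omega]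
      have hCpos : (0 : ℝ) < ((k + 2).choose 2 : ℝ) := by
        exact_mod_cast Nat.choose_pos (by omega : 2 ≤ k + 2)
      rw [hCk, hCk1, Nat.choose_self, Nat.cast_one, div_one]
      rw [div_mul_eq_mul_div, div_pow, div_le_div_iff₀ hCpos (by positivity)]
      have h2Cr : 2 * (((k + 2).choose 2 : ℕ) : ℝ) = ((k : ℝ) + 2) * ((k : ℝ) + 1) := by
        exact_mod_cast h2C
      set ek := s.esymm k
      set ek1 := s.esymm (k + 1)
      set ek2 := s.esymm (k + 2)
      have e1 : ek * ek2 * ((k : ℝ) + 2) ^ 2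
          = (((k : ℝ) + 2) / 2) * (2 * ((k : ℝ) + 2) * (ek * ek2)) := by ring
      have e2 : ek1 ^ 2 * (((k + 2).choose 2 : ℕ) : ℝ)
          = (((k : ℝ) + 2) / 2) * (((k : ℝ) + 1) * ek1 ^ 2) := by
        linear_combination (ek1 ^ 2 / 2) * h2Cr
      push_cast at htop ⊢
      rw [e1, e2]
      exact mul_le_mul_of_nonneg_left htop (by positivity)
    · -- derivative step
      have hm1 : 1 ≤ Multiset.card s := by omega
      obtain ⟨t, htc, hrel⟩ := newtonDeriv s hm1
      rw [hs] at htc hrel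
      have key : ∀ j ≤ m - 1,
          s.esymm j / (m.choose j : ℝ) = t.esymm j / ((m - 1).choose j : ℝ) := by
        intro j hj
        have h1 := hrel j hj
        have hcid : (((m - j) * m.choose j : ℕ) : ℝ) = ((m * (m - 1).choose j : ℕ) : ℝ) := by
          exact_mod_cast congrArg Nat.cast (newtonChooseId m j (by omega))
        push_cast at hcid
        have hc1 : (0 : ℝ) < (m.choose j : ℝ) := by
          exact_mod_cast Nat.choose_pos (by omega : j ≤ m)
        have hc2 : (0 : ℝ) < ((m - 1).choose j : ℝ) := by
          exact_mod_cast Nat.choose_pos hj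
        rw [div_eq_div_iff hc1.ne' hc2.ne']
        have hm0 : (m : ℝ) ≠ 0 := Nat.cast_ne_zero.2 (by omega)
        have h2 : (m : ℝ) * (s.esymm j * ((m - 1).choose j : ℝ))
            = (m : ℝ) * (t.esymm j * (m.choose j : ℝ)) := by
          linear_combination (-(m.choose j : ℝ)) * h1 - s.esymm j * hcid
        exact mul_left_cancel₀ hm0 h2
      rw [key k (by omega), key (k + 1) (by omega), key (k + 2) (by omega)]
      exact ih (m - 1) (by omega) t htc k (by omega)

/-- The `k`-th elementary symmetric polynomial of `x : Fin n → ℝ`. -/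
noncomputable def esymmS (n : ℕ) (x : Fin n → ℝ) (k : ℕ) : ℝ :=
  ∑ A ∈ Finset.powersetCard k (Finset.univ : Finset (Fin n)), ∏ i ∈ A, x i

/-- The normalized `k`-th elementary symmetric function `H_k = S_k(x)/C(n,k)`. -/
noncomputable def normH (n : ℕ) (x : Fin n → ℝ) (k : ℕ) : ℝ :=
  esymmS n x k / (n.choose k)

/-- Newton–Maclaurin inequality: `H_k · H_{k+2} ≤ H_{k+1}²` for all real `x`. -/
theorem newton_maclaurin (n : ℕ) (hn : 2 ≤ n) (x : Fin n → ℝ) (k : ℕ)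
    (hk : k ≤ n - 2) :
    normH n x k * normH n x (k + 2) ≤ (normH n x (k + 1)) ^ 2 := by
  set s : Multiset ℝ := Finset.univ.val.map x with hsdef
  have hcard : Multiset.card s = n := by
    rw [hsdef, Multiset.card_map]
    simp
  have hes : ∀ j, s.esymm j = esymmS n x j := by
    intro j
    rw [hsdef, Finset.esymm_map_val]
    rfl
  have h := newton_ms n s hcard k (by omega)
  simp only [normH, ← hes]
  exact h
end

section
/- For nonnegative reals x_1,…,x_n with normalized symmetric functions H_k = S_k(x)/C(n,k), if H_r > 0 for some r ∈ {2,…,n} then H_{r−1} ≥ H_r^{(r−1)/r}. -/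
open Polynomial


lemma esymm_nonneg_aux (s : Multiset ℝ) (hs : ∀ a ∈ s, 0 ≤ a) (k : ℕ) : 0 ≤ s.esymm k := by
  unfold Multiset.esymm
  apply Multiset.sum_nonneg
  intro p hp
  rw [Multiset.mem_map] at hp
  obtain ⟨t, ht, rfl⟩ := hp
  rw [Multiset.mem_powersetCard] at ht
  exact Multiset.prod_nonneg fun a ha => hs a (Multiset.mem_of_le ht.1 ha)

lemma exists_deriv_multiset (s : Multiset ℝ) (hs : ∀ a ∈ s, 0 ≤ a) (hn : 2 ≤ Multiset.card s) :
    ∃ t : Multiset ℝ, Multiset.card t = Multiset.card s - 1 ∧ (∀ a ∈ t, 0 ≤ a) ∧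
      ∀ m ≤ Multiset.card s - 1,
        (Multiset.card s : ℝ) * t.esymm m = ((Multiset.card s : ℝ) - m) * s.esymm m := by
  set n := Multiset.card s with hn_def
  set p : ℝ[X] := (s.map fun a => X + C a).prod with hp_def
  have hmono : ∀ a ∈ s, (X + C a).Monic := fun a _ => monic_X_add_C a
  have hmono' : ∀ f ∈ s.map fun a => X + C a, f.Monic := by
    intro f hf; rw [Multiset.mem_map] at hf; obtain ⟨a, _, rfl⟩ := hf; exact monic_X_add_C a
  have hmonic : p.Monic := monic_multiset_prod_of_monic _ _ hmono
  have hdeg : p.natDegree = n := by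
    rw [hp_def, natDegree_multiset_prod_of_monic _ hmono']
    simp [Multiset.map_map, natDegree_X_add_C]
    exact hn_def.symm
  have hcoeffp : ∀ k, k ≤ n → p.coeff k = s.esymm (n - k) := fun k hk =>
    Multiset.prod_X_add_C_coeff s hk
  have hcoeffp_nonneg : ∀ k, 0 ≤ p.coeff k := by
    intro k
    rcases le_or_gt k n with h | h
    · rw [hcoeffp k h]; exact esymm_nonneg_aux s hs _
    · rw [coeff_eq_zero_of_natDegree_lt (hdeg ▸ h)]
  set q := derivative p with hq_def
  have hqcoeff : ∀ k, q.coeff k = p.coeff (k + 1) * (k + 1) := fun k => coeff_derivative p k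
  have hqnonneg : ∀ k, 0 ≤ q.coeff k := fun k => by
    rw [hqcoeff]
    exact mul_nonneg (hcoeffp_nonneg _) (by positivity)
  have hrootsp : p.roots = s.map fun a => -a := by
    rw [hp_def, roots_multiset_prod]
    · rw [Multiset.bind_map]
      have : ∀ a : ℝ, (X + C a).roots = {-a} := by
        intro a
        have : X + C a = X - C (-a) := by rw [map_neg, sub_neg_eq_add]
        rw [this, roots_X_sub_C]
      simp [this]
    · intro h
      rw [Multiset.mem_map] at h
      obtain ⟨a, _, ha⟩ := h
      exact (monic_X_add_C a).ne_zero ha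
  have hcardp : Multiset.card p.roots = n := by rw [hrootsp, Multiset.card_map]
  have h1 : n ≤ Multiset.card q.roots + 1 := by rw [← hcardp]; exact p.card_roots_le_derivative
  have h2 : Multiset.card q.roots ≤ q.natDegree := q.card_roots'
  have h3 : q.natDegree ≤ n - 1 := hdeg ▸ natDegree_derivative_le p
  have hqdeg : q.natDegree = n - 1 := by omega
  have hqcard : Multiset.card q.roots = q.natDegree := by omega
  have hpn : p.coeff n = 1 := by rw [← hdeg]; exact hmonic.coeff_natDegree
  have hlc : q.coeff (n - 1) = n := by
    rw [hqcoeff, show n - 1 + 1 = n by omega, hpn, one_mul]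
    rw [Nat.cast_sub (by omega)]
    ring
  have hqne : q ≠ 0 := by
    intro h
    rw [h, coeff_zero] at hlc
    have : (n : ℝ) > 0 := by positivity
    rw [← hlc] at this
    exact lt_irrefl _ this
  have hrootsq_nonpos : ∀ z ∈ q.roots, z ≤ 0 := by
    intro z hz
    by_contra hzpos
    push_neg at hzpos
    have heval : q.eval z = 0 := (mem_roots hqne).1 hz
    have hlt : 0 < q.eval z := by
      rw [eval_eq_sum_range]
      have hmem : n - 1 ∈ Finset.range (q.natDegree + 1) := by rw [hqdeg]; simp
      calc (0:ℝ) < q.coeff (n-1) * z ^ (n-1) := by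
            rw [hlc]
            have : (0:ℝ) < n := by positivity
            exact mul_pos this (pow_pos hzpos _)
        _ ≤ ∑ i ∈ Finset.range (q.natDegree + 1), q.coeff i * z ^ i :=
            Finset.single_le_sum (f := fun i => q.coeff i * z ^ i)
              (fun i _ => mul_nonneg (hqnonneg i) (pow_nonneg hzpos.le _)) hmem
    rw [heval] at hlt
    exact lt_irrefl _ hlt
  refine ⟨q.roots.map fun z => -z, by simp [hqcard, hqdeg], ?_, ?_⟩
  · intro a ha
    rw [Multiset.mem_map] at ha
    obtain ⟨z, hz, rfl⟩ := ha
    linarith [hrootsq_nonpos z hz]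
  · intro m hm
    have hfac : C q.leadingCoeff * (q.roots.map fun a => X - C a).prod = q :=
      q.C_leadingCoeff_mul_prod_multiset_X_sub_C hqcard
    have hlc' : q.leadingCoeff = (n : ℝ) := by rw [leadingCoeff, hqdeg]; exact hlc
    set t := q.roots.map fun z => -z with ht_def
    have hmapeq : (t.map fun a => X + C a) = q.roots.map fun a => X - C a := by
      rw [ht_def, Multiset.map_map]
      apply Multiset.map_congr rfl
      intro z _
      simp [sub_eq_add_neg]
    have hcardt : Multiset.card t = n - 1 := by rw [ht_def, Multiset.card_map]; omega
    have hcoeffq : q.coeff (n - 1 - m) = n * t.esymm m := by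
      conv_lhs => rw [← hfac]
      rw [coeff_C_mul, hlc', ← hmapeq,
        Multiset.prod_X_add_C_coeff t (show n - 1 - m ≤ Multiset.card t by omega)]
      rw [hcardt, show n - 1 - (n - 1 - m) = m by omega]
    have hcoeffq2 : q.coeff (n - 1 - m) = s.esymm m * ((n : ℝ) - m) := by
      rw [hqcoeff, hcoeffp (n - 1 - m + 1) (by omega), show n - (n - 1 - m + 1) = m by omega]
      congr 1
      rw [Nat.cast_sub (by omega), Nat.cast_sub (by omega)]
      push_cast
      ring
    rw [hcoeffq] at hcoeffq2
    linarith [hcoeffq2]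


lemma esymmS_nonneg (n : ℕ) (x : Fin n → ℝ) (hx : ∀ i, 0 ≤ x i) (k : ℕ) :
    0 ≤ esymmS n x k :=
  Finset.sum_nonneg fun A _ => Finset.prod_nonneg fun i _ => hx i

lemma esymmS_eq_esymm (n : ℕ) (x : Fin n → ℝ) (k : ℕ) :
    esymmS n x k = ((Finset.univ : Finset (Fin n)).val.map x).esymm k := by
  rw [Finset.esymm_map_val]
  rfl

lemma amgm_fin (n : ℕ) (hn : 1 ≤ n) (a : Fin n → ℝ) (ha : ∀ i, 0 ≤ a i) :
    ∏ i, a i ≤ ((∑ i, a i) / n) ^ n := by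
  have hn0 : (0:ℝ) < n := by exact_mod_cast hn
  have h := Real.geom_mean_le_arith_mean_weighted Finset.univ (fun _ => (n:ℝ)⁻¹) a
      (fun _ _ => by positivity)
      (by simp [Finset.card_univ]; field_simp) (fun i _ => ha i)
  have hL : ∏ i, a i ^ ((n:ℝ)⁻¹) = (∏ i, a i) ^ ((n:ℝ)⁻¹) := by
    rw [← Real.finset_prod_rpow _ _ (fun i _ => ha i)]
  have hR : ∑ i : Fin n, (n:ℝ)⁻¹ * a i = (∑ i, a i) / n := by
    rw [← Finset.mul_sum]; ring
  rw [hL, hR] at h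
  have hpnn : 0 ≤ ∏ i, a i := Finset.prod_nonneg fun i _ => ha i
  have h2 := pow_le_pow_left₀ (Real.rpow_nonneg hpnn _) h n
  rwa [← Real.rpow_natCast ((∏ i, a i) ^ ((n:ℝ)⁻¹)) n, ← Real.rpow_mul hpnn,
    inv_mul_cancel₀ hn0.ne', Real.rpow_one] at h2

lemma esymmS_top (n : ℕ) (x : Fin n → ℝ) : esymmS n x n = ∏ i, x i := by
  unfold esymmS
  have h := Finset.powersetCard_self (Finset.univ : Finset (Fin n))
  rw [Finset.card_univ, Fintype.card_fin] at h
  rw [h, Finset.sum_singleton]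

lemma esymmS_sub_one (n : ℕ) (hn : 1 ≤ n) (x : Fin n → ℝ) :
    esymmS n x (n - 1) = ∑ i, ∏ j ∈ Finset.univ.erase i, x j := by
  unfold esymmS
  rw [show Finset.powersetCard (n-1) (Finset.univ : Finset (Fin n))
      = Finset.image (fun i => Finset.univ.erase i) Finset.univ from ?_]
  · rw [Finset.sum_image]
    intro i _ j _ hij
    by_contra hne
    have : i ∈ Finset.univ.erase j := Finset.mem_erase.2 ⟨hne, Finset.mem_univ i⟩
    beta_reduce at hij
    rw [← hij] at this
    exact (Finset.mem_erase.1 this).1 rfl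
  · ext A
    simp only [Finset.mem_powersetCard, Finset.mem_image, Finset.mem_univ, true_and]
    constructor
    · rintro ⟨-, hcard⟩
      have hc : Aᶜ.card = 1 := by
        rw [Finset.card_compl, hcard, Fintype.card_fin]
        omega
      obtain ⟨i, hi⟩ := Finset.card_eq_one.1 hc
      refine ⟨i, ?_⟩
      rw [← Finset.compl_singleton, ← hi, compl_compl]
    · rintro ⟨i, rfl⟩
      exact ⟨Finset.subset_univ _, by
        rw [Finset.card_erase_of_mem (Finset.mem_univ i), Finset.card_univ, Fintype.card_fin]⟩

lemma base_case (n : ℕ) (hn : 2 ≤ n) (x : Fin n → ℝ) (hx : ∀ i, 0 ≤ x i) :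
    (esymmS n x n) ^ (n - 1) ≤ (esymmS n x (n - 1) / n) ^ n := by
  set a : Fin n → ℝ := fun i => ∏ j ∈ Finset.univ.erase i, x j with ha_def
  have ha : ∀ i, 0 ≤ a i := fun i => Finset.prod_nonneg fun j _ => hx j
  rcases eq_or_ne (∏ i, x i) 0 with h0 | h0
  · rw [esymmS_top, h0, zero_pow (by omega)]
    apply pow_nonneg
    exact div_nonneg (esymmS_nonneg n x hx _) (by positivity)
  · have key : (∏ i, x i) * (∏ i, a i) = (∏ i, x i) ^ n := by
      calc (∏ i, x i) * ∏ i, a i = ∏ i, (x i * a i) := (Finset.prod_mul_distrib).symm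
        _ = ∏ _i : Fin n, (∏ j, x j) := by
            apply Finset.prod_congr rfl
            intro i _
            exact Finset.mul_prod_erase Finset.univ x (Finset.mem_univ i)
        _ = (∏ j, x j) ^ n := by rw [Finset.prod_const, Finset.card_univ, Fintype.card_fin]
    have hpa : ∏ i, a i = (∏ i, x i) ^ (n - 1) := by
      apply mul_left_cancel₀ h0
      rw [key, ← pow_succ', Nat.sub_add_cancel (by omega)]
    rw [esymmS_top, esymmS_sub_one n (by omega), ← hpa]
    exact amgm_fin n (by omega) a ha

lemma maclaurin_key : ∀ n : ℕ, ∀ x : Fin n → ℝ, (∀ i, 0 ≤ x i) → ∀ r, 2 ≤ r → r ≤ n →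
    (esymmS n x r / (n.choose r : ℝ)) ^ (r - 1)
      ≤ (esymmS n x (r - 1) / (n.choose (r - 1) : ℝ)) ^ r := by
  intro n
  induction n using Nat.strong_induction_on with
  | _ n ih =>
  intro x hx r hr2 hrn
  rcases eq_or_lt_of_le hrn with rfl | hlt
  · have h := base_case r hr2 x hx
    have hc1 : r.choose r = 1 := Nat.choose_self r
    have hc2 : r.choose (r - 1) = r := by
      rw [← Nat.choose_symm (by omega : r - 1 ≤ r), Nat.sub_sub_self (by omega),
        Nat.choose_one_right]
    rw [hc1, hc2]
    simpa using h
  · have hn2 : 2 ≤ n := by omega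
    set s : Multiset ℝ := (Finset.univ : Finset (Fin n)).val.map x with hs_def
    have hcards : Multiset.card s = n := by
      rw [hs_def, Multiset.card_map]
      simp
    have hsnn : ∀ a ∈ s, 0 ≤ a := by
      intro a ha
      rw [hs_def, Multiset.mem_map] at ha
      obtain ⟨i, _, rfl⟩ := ha
      exact hx i
    obtain ⟨t, hcardt, htnn, hrel⟩ := exists_deriv_multiset s hsnn (by omega)
    rw [hcards] at hcardt hrel
    set l := t.toList with hl_def
    have hl : (l : Multiset ℝ) = t := t.coe_toList
    have hlen : l.length = n - 1 := by
      rw [← Multiset.coe_card, hl, hcardt]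
    set y : Fin (n - 1) → ℝ := fun i => l.get ⟨(i : ℕ), by omega⟩ with hy_def
    have hymap : (Finset.univ : Finset (Fin (n-1))).val.map y = t := by
      rw [Fin.univ_val_map, ← hl]
      congr 1
      apply List.ext_get
      · rw [List.length_ofFn, hlen]
      · intro i h1 h2
        rw [List.get_ofFn]
        rfl
    have hynn : ∀ i, 0 ≤ y i := by
      intro i
      apply htnn
      rw [← hymap]
      exact Multiset.mem_map_of_mem y (Finset.mem_univ_val i)
    have hsx : ∀ k, esymmS n x k = s.esymm k := fun k => esymmS_eq_esymm n x k
    have hty : ∀ k, esymmS (n-1) y k = t.esymm k := by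
      intro k
      rw [esymmS_eq_esymm, hymap]
    have hHeq : ∀ m, m ≤ n - 1 →
        esymmS (n-1) y m / (((n-1).choose m : ℕ) : ℝ) = esymmS n x m / ((n.choose m : ℕ) : ℝ) := by
      intro m hm
      have h1 := hrel m hm
      have hc1 : (0:ℝ) < (((n-1).choose m : ℕ) : ℝ) := by
        exact_mod_cast Nat.choose_pos hm
      have hc2 : (0:ℝ) < ((n.choose m : ℕ) : ℝ) := by
        exact_mod_cast Nat.choose_pos (by omega : m ≤ n)
      have hid : (n : ℝ) * (((n-1).choose m : ℕ) : ℝ) = ((n:ℝ) - m) * ((n.choose m : ℕ) : ℝ) := by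
        have hnat : n * (n-1).choose m = (n - m) * n.choose m := by
          have e1 : Nat.succ (n-1) * (n-1).choose m = n.choose (m+1) * (m+1) := by
            rw [Nat.add_one_mul_choose_eq]
            congr 2
            omega
          have e2 : n.choose (m+1) * (m+1) = n.choose m * (n - m) := Nat.choose_succ_right_eq n m
          rw [show Nat.succ (n-1) = n by omega] at e1
          rw [e1, e2, Nat.mul_comm]
        have := congrArg (fun k : ℕ => (k : ℝ)) hnat
        push_cast at this
        rw [Nat.cast_sub (by omega : m ≤ n)] at this
        push_cast at this
        linarith [this]
      rw [hty, hsx, div_eq_div_iff hc1.ne' hc2.ne']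
      apply mul_left_cancel₀ (show (n:ℝ) ≠ 0 by positivity)
      calc (n:ℝ) * (t.esymm m * ((n.choose m : ℕ) : ℝ))
          = ((n:ℝ) * t.esymm m) * ((n.choose m : ℕ) : ℝ) := by ring
        _ = (((n:ℝ) - m) * s.esymm m) * ((n.choose m : ℕ) : ℝ) := by rw [h1]
        _ = s.esymm m * (((n:ℝ) - m) * ((n.choose m : ℕ) : ℝ)) := by ring
        _ = s.esymm m * ((n : ℝ) * (((n-1).choose m : ℕ) : ℝ)) := by rw [← hid]
        _ = (n:ℝ) * (s.esymm m * (((n-1).choose m : ℕ) : ℝ)) := by ring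
    have hih := ih (n-1) (by omega) y hynn r hr2 (by omega)
    rw [hHeq r (by omega), hHeq (r-1) (by omega)] at hih
    exact hih

/-- For nonnegative `x` with `H_r > 0`, `r ∈ {2,…,n}`, one has `H_{r-1} ≥ H_r^{(r-1)/r}`. -/
theorem Hrm1_ge_Hr_pow (n r : ℕ) (hn : 2 ≤ n) (hr2 : 2 ≤ r) (hrn : r ≤ n)
    (x : Fin n → ℝ) (hx : ∀ i, 0 ≤ x i) (hpos : 0 < normH n x r) :
    (normH n x r) ^ (((r : ℝ) - 1) / r) ≤ normH n x (r - 1) := by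
  have hkey : (normH n x r) ^ (r - 1) ≤ (normH n x (r-1)) ^ r :=
    maclaurin_key n x hx r hr2 hrn
  set A := normH n x r with hA_def
  set B := normH n x (r - 1) with hB_def
  have hBnn : 0 ≤ B := by
    rw [hB_def, normH]
    exact div_nonneg (esymmS_nonneg n x hx _) (by positivity)
  have hB : 0 < B := by
    rcases hBnn.lt_or_eq with h | h
    · exact h
    · exfalso
      rw [← h] at hkey
      rw [zero_pow (by omega : r ≠ 0)] at hkey
      have := pow_pos hpos (r - 1)
      linarith
  have hr0 : ((r:ℝ)) ≠ 0 := by positivity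
  have h1 : A ^ (((r:ℝ) - 1) / r) = (A ^ (r - 1 : ℕ)) ^ ((r:ℝ)⁻¹) := by
    rw [← Real.rpow_natCast A (r-1), ← Real.rpow_mul hpos.le]
    congr 1
    rw [Nat.cast_sub (by omega : 1 ≤ r)]
    push_cast
    field_simp
  have h2 : (B ^ (r : ℕ)) ^ ((r:ℝ)⁻¹) = B := by
    rw [← Real.rpow_natCast B r, ← Real.rpow_mul hB.le, mul_inv_cancel₀ hr0, Real.rpow_one]
  calc A ^ (((r:ℝ) - 1) / r) = (A ^ (r - 1 : ℕ)) ^ ((r:ℝ)⁻¹) := h1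
    _ ≤ (B ^ (r : ℕ)) ^ ((r:ℝ)⁻¹) :=
        Real.rpow_le_rpow (pow_nonneg hpos.le _) hkey (by positivity)
    _ = B := h2
end
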